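/- Let κ be an infinite cardinal with κ^ω = κ, let p be a free ultrafilter on ω, let n ∈ ω, and let {f_ξ : κ ≤ ξ < κ + κ} ⊆ (ℤ^(κ))^ω be a family such that the classes [f_ξ]_p (κ ≤ ξ < κ+κ) are pairwise distinct and {[f_ξ]_p : κ ≤ ξ < κ+κ} ∪ {[χ⃗_ξ]_p : ξ < κ} is a ℚ-linearly independent subset of Ult(ℚ,p). Let G be the intersection of Ult(ℤ,p) with the subgroup of Ult(ℚ,p) generated by {(1/n!)·[f_ξ]_p : κ ≤ ξ < κ+κ} ∪ {(1/n!)·[χ⃗_ξ]_p : ξ < κ}. Then G is a free abelian group that admits a free basis of the form {[χ⃗_ξ]_p : ξ < κ} ∪ {[f]_p : f ∈ ℱ} for some subset ℱ of (ℤ^(κ))^ω. -/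

import Mathlib

open Cardinal Filter Set Pointwise

noncomputable section

/-- A free (nonprincipal) ultrafilter on ω. -/
def IsFreeUltrafilter (p : Ultrafilter ℕ) : Prop := ∀ n : ℕ, p ≠ pure n

/-- A selective ultrafilter on ω. -/
def IsSelective (p : Ultrafilter ℕ) : Prop :=
  IsFreeUltrafilter p ∧
  ∀ A : ℕ → Set ℕ,
    (∀ k, (A k).Nonempty) → (Pairwise fun k l => Disjoint (A k) (A l)) →
    (⋃ k, A k) = Set.univ →
    (∃ k, A k ∈ p) ∨ ∃ B ∈ p, ∀ k, ∃! n, n ∈ B ∩ A k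

/-- Rudin–Keisler order: `U ≤ V` iff `V = f_*(U)` for some `f`. -/
def RKle (U V : Ultrafilter ℕ) : Prop := ∃ f : ℕ → ℕ, Ultrafilter.map f U = V

/-- Rudin–Keisler incomparability. -/
def RKIncomp (U V : Ultrafilter ℕ) : Prop := ¬ RKle U V ∧ ¬ RKle V U

/-- The index set of order type (the initial ordinal of) `κ`. -/
abbrev Idx (κ : Cardinal) : Type _ := ↥(Set.Iio κ.ord)

/-- The free abelian group `ℤ^(κ)` of finitely supported integer functions on `κ`. -/
abbrev GZ (κ : Cardinal) := Idx κ →₀ ℤ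

/-- The ℚ-vector space `ℚ^(κ)` of finitely supported rational functions on `κ`. -/
abbrev GQ (κ : Cardinal) := Idx κ →₀ ℚ

/-- The canonical embedding `ℤ^(κ) → ℚ^(κ)`. -/
def toQ (κ : Cardinal) (f : GZ κ) : GQ κ :=
  Finsupp.mapRange (Int.cast : ℤ → ℚ) Int.cast_zero f

/-- The characteristic function `χ_ξ`. -/
def chi (κ : Cardinal) (ξ : Idx κ) : GZ κ := Finsupp.single ξ 1

/-- The class `[f]_p` of a sequence `f : ω → ℤ^(κ)` in the ultrapower
`Ult(ℚ, p) = (ℚ^(κ))^ω / p`, realized as a germ. -/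
def cls (κ : Cardinal) (p : Ultrafilter ℕ) (f : ℕ → GZ κ) :
    Filter.Germ (↑p : Filter ℕ) (GQ κ) :=
  (↑(fun n => toQ κ (f n)) : Filter.Germ (↑p : Filter ℕ) (GQ κ))

/-- The class `[χ⃗_ξ]_p` of the constant sequence with value `χ_ξ`. -/
def clsChi (κ : Cardinal) (p : Ultrafilter ℕ) (ξ : Idx κ) :
    Filter.Germ (↑p : Filter ℕ) (GQ κ) :=
  cls κ p (fun _ => chi κ ξ)

/-- `cls` as an additive homomorphism. -/
def clsHom (κ : Cardinal) (p : Ultrafilter ℕ) :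
    (ℕ → GZ κ) →+ Filter.Germ (↑p : Filter ℕ) (GQ κ) :=
  AddMonoidHom.mk' (cls κ p) (by
    intro a b
    unfold cls
    have h : (fun n => toQ κ ((a + b) n)) =
        (fun n => toQ κ (a n)) + (fun n => toQ κ (b n)) := by
      funext n
      simp only [Pi.add_apply, toQ]
      exact Finsupp.mapRange_add (fun x y => by push_cast; ring) _ _
    rw [h, ← Filter.Germ.coe_add])

/-- `Ult(ℤ, p)`: the subgroup of `Ult(ℚ, p)` consisting of classes of
integer-valued sequences. -/
def UltZ (κ : Cardinal) (p : Ultrafilter ℕ) :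
    AddSubgroup (Filter.Germ (↑p : Filter ℕ) (GQ κ)) :=
  (clsHom κ p).range

/-- `ℱ` is linearly independent mod `A*`. -/
def LinIndepMod (κ : Cardinal) (A : Set ℕ) (F : Set (ℕ → GZ κ)) : Prop :=
  ∀ p : Ultrafilter ℕ, IsFreeUltrafilter p → A ∈ p →
    (∀ f ∈ F, ∀ g ∈ F, f ≠ g → cls κ p f ≠ cls κ p g) ∧
    LinearIndependent ℚ
      (Sum.elim (fun f : F => cls κ p ↑f) (fun ξ : Idx κ => clsChi κ p ξ))

/-- `ℰ` is maximal (w.r.t. inclusion) among subsets linearly independent mod `A*`. -/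
def MaximalLinIndepMod (κ : Cardinal) (A : Set ℕ) (E : Set (ℕ → GZ κ)) : Prop :=
  LinIndepMod κ A E ∧ ∀ E' : Set (ℕ → GZ κ), LinIndepMod κ A E' → E ⊆ E' → E' = E

/-- A finite tower in ω: a finite decreasing sequence of infinite subsets of ω. -/
def IsTower (T : List (Set ℕ)) : Prop :=
  (∀ A ∈ T, A.Infinite) ∧
  ∀ i : ℕ, ∀ h : i + 1 < T.length, T.get ⟨i + 1, h⟩ ⊆ T.get ⟨i, Nat.lt_of_succ_lt h⟩

/-- `l(T)`: the last term of a finite tower, with `l(∅) = ω`. -/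
def lastOf (T : List (Set ℕ)) : Set ℕ := T.getLastD Set.univ

/-- `x` is a `p`-limit of the sequence `s`. -/
def IsPLim {X : Type*} [TopologicalSpace X] (p : Ultrafilter ℕ) (s : ℕ → X) (x : X) : Prop :=
  ∀ U ∈ nhds x, {n | s n ∈ U} ∈ p

/-- Countable compactness: every countable open cover has a finite subcover. -/
def CountablyCompactSp (X : Type*) [TopologicalSpace X] : Prop :=
  ∀ 𝒰 : Set (Set X), 𝒰.Countable → (∀ u ∈ 𝒰, IsOpen u) → ⋃₀ 𝒰 = Set.univ →
    ∃ ℱ ⊆ 𝒰, ℱ.Finite ∧ ⋃₀ ℱ = Set.univ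


/-- The subgroup `G_{T,n}`: the intersection of `Ult(ℤ,p)` with the subgroup of
`Ult(ℚ,p)` generated by `{(1/n!)·[f]_p : f ∈ S} ∪ {(1/n!)·[χ⃗_ξ]_p : ξ < κ}`. -/
def Gsub (κ : Cardinal) (p : Ultrafilter ℕ) (S : Set (ℕ → GZ κ)) (n : ℕ) :
    AddSubgroup (Filter.Germ (↑p : Filter ℕ) (GQ κ)) :=
  UltZ κ p ⊓ AddSubgroup.closure
    ({x | ∃ f ∈ S, x = ((n.factorial : ℚ))⁻¹ • cls κ p f} ∪
     {x | ∃ ξ : Idx κ, x = ((n.factorial : ℚ))⁻¹ • clsChi κ p ξ})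

section Kaplansky


open Finsupp Submodule

theorem submodule_finsuppInt_free {ι : Type*} [LinearOrder ι] [WellFoundedLT ι]
    (N : Submodule ℤ (ι →₀ ℤ)) : Module.Free ℤ N := by
  classical
  set E : ι → Submodule ℤ (ι →₀ ℤ) := fun i => Finsupp.supported ℤ ℤ (Set.Iic i) with hE
  set I : ι → Ideal ℤ := fun i => (N ⊓ E i).map (Finsupp.lapply i) with hI
  set d : ι → ℤ := fun i => Submodule.IsPrincipal.generator (I i) with hd
  set S := {i : ι // d i ≠ 0} with hS
  have hdmem : ∀ i, d i ∈ I i := fun i => Submodule.IsPrincipal.generator_mem (I i)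
  have hx : ∀ i : S, ∃ y, (y ∈ N ∧ y ∈ E i.1) ∧ y i.1 = d i.1 := by
    rintro ⟨i, hi⟩
    obtain ⟨y, hy, hyi⟩ := Submodule.mem_map.1 (hdmem i)
    exact ⟨y, Submodule.mem_inf.1 hy, hyi⟩
  set x : S → (ι →₀ ℤ) := fun i => (hx i).choose with hxdef
  have hxN : ∀ i : S, x i ∈ N := fun i => (hx i).choose_spec.1.1
  have hxsupp : ∀ (i : S) (j : ι), i.1 < j → x i j = 0 := by
    intro i j hij
    by_contra h
    have := (Finsupp.mem_supported ℤ (x i)).1 (hx i).choose_spec.1.2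
    exact absurd (this (Finsupp.mem_support_iff.2 h)) (by simpa using hij.not_ge)
  have hxi : ∀ i : S, x i i.1 = d i.1 := fun i => (hx i).choose_spec.2
  -- membership in I i via coordinate
  have hmemI : ∀ (i : ι) (y : ι →₀ ℤ), y ∈ N → (∀ j, y j ≠ 0 → j ≤ i) → y i ∈ I i := by
    intro i y hyN hysupp
    exact Submodule.mem_map.2 ⟨y, Submodule.mem_inf.2 ⟨hyN,
      (Finsupp.mem_supported ℤ y).2 fun j hj => hysupp j (Finsupp.mem_support_iff.1 hj)⟩, rfl⟩
  have hdvd : ∀ (i : ι) (z : ℤ), z ∈ I i → d i ∣ z := by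
    intro i z hz
    rw [← Ideal.span_singleton_generator (I i)] at hz
    exact Ideal.mem_span_singleton.1 hz
  -- linear independence of x
  have hli : LinearIndependent ℤ x := by
    rw [linearIndependent_iff]
    intro l hl
    by_contra hl0
    have hne : l.support.Nonempty := Finsupp.support_nonempty_iff.2 hl0
    set i := l.support.max' hne with hi
    have hmem : i ∈ l.support := l.support.max'_mem hne
    have := congrArg (fun z : ι →₀ ℤ => z i.1) hl
    rw [Finsupp.linearCombination_apply, Finsupp.sum] at this
    simp only [Finsupp.coe_finset_sum, Finset.sum_apply, Finsupp.coe_smul, Pi.smul_apply,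
      Finsupp.coe_zero, Pi.zero_apply, smul_eq_mul] at this
    rw [Finset.sum_eq_single i] at this
    · rw [hxi i] at this
      exact Finsupp.mem_support_iff.1 hmem (by
        rcases mul_eq_zero.1 this with h | h
        · exact h
        · exact absurd h i.2)
    · intro j hj hji
      have hjle : j ≤ i := l.support.le_max' j hj
      have : j.1 < i.1 := lt_of_le_of_ne hjle (fun h => hji (Subtype.ext h))
      rw [hxsupp j i.1 this, mul_zero]
    · intro h; exact absurd hmem h
  -- spanning
  have key : ∀ i : ι, ∀ y ∈ N, (∀ j, y j ≠ 0 → j ≤ i) →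
      y ∈ Submodule.span ℤ (Set.range x) := by
    intro i
    induction i using WellFoundedLT.induction with
    | _ i IH =>
    have hlow : ∀ z ∈ N, (∀ j, z j ≠ 0 → j < i) → z ∈ Submodule.span ℤ (Set.range x) := by
      intro z hzN hz
      by_cases hz0 : z = 0
      · simp [hz0]
      · have hzn : z.support.Nonempty := Finsupp.support_nonempty_iff.2 hz0
        set m := z.support.max' hzn with hm
        have hmlt : m < i := hz m (Finsupp.mem_support_iff.1 (z.support.max'_mem hzn))
        exact IH m hmlt z hzN fun j hj => z.support.le_max' j (Finsupp.mem_support_iff.2 hj)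
    intro y hyN hysupp
    by_cases hyi : y i = 0
    · exact hlow y hyN fun j hj => lt_of_le_of_ne (hysupp j hj)
        (by rintro rfl; exact hj hyi)
    · have hdi : d i ≠ 0 := by
        intro h0
        obtain ⟨c, hc⟩ := hdvd i (y i) (hmemI i y hyN hysupp)
        rw [h0, zero_mul] at hc
        exact hyi hc
      obtain ⟨c, hc⟩ := hdvd i (y i) (hmemI i y hyN hysupp)
      set σ : S := ⟨i, hdi⟩ with hσ
      set z := y - c • x σ with hz
      have hzN : z ∈ N := Submodule.sub_mem N hyN (Submodule.smul_mem N c (hxN σ))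
      have hzi : z i = 0 := by
        have hxi' : x ⟨i, hdi⟩ i = d i := hxi σ
        simp [hz, hxi', hσ, hc, mul_comm]
      have hzsupp : ∀ j, z j ≠ 0 → j < i := by
        intro j hj
        rcases lt_or_ge i j with h | h
        · exfalso
          have : z j = 0 := by
            simp [hz, hxsupp σ j h, (by
              by_contra hyj
              exact absurd (hysupp j hyj) h.not_ge : y j = 0)]
          exact hj this
        · exact lt_of_le_of_ne h (by rintro rfl; exact hj hzi)
      have hzspan := hlow z hzN hzsupp
      have : y = z + c • x σ := by simp [hz]
      rw [this]
      exact Submodule.add_mem _ hzspan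
        (Submodule.smul_mem _ c (Submodule.subset_span ⟨σ, rfl⟩))
  -- basis of N
  set v : S → ↥N := fun i => ⟨x i, hxN i⟩ with hv
  have hvli : LinearIndependent ℤ v :=
    hli.of_comp N.subtype
  have hvspan : ⊤ ≤ Submodule.span ℤ (Set.range v) := by
    rintro ⟨y, hyN⟩ -
    by_cases hy0 : y = 0
    · have : (⟨y, hyN⟩ : ↥N) = 0 := Subtype.ext hy0
      rw [this]; exact Submodule.zero_mem _
    · have hyn : y.support.Nonempty := Finsupp.support_nonempty_iff.2 hy0
      have hspan := key (y.support.max' hyn) y hyN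
        (fun j hj => y.support.le_max' j (Finsupp.mem_support_iff.2 hj))
      have hxcomp : Set.range x = Set.range (N.subtype ∘ v) := by
        ext w; simp [hv]
      rw [hxcomp, Set.range_comp, ← Submodule.map_span] at hspan
      obtain ⟨w, hw, hwy⟩ := Submodule.mem_map.1 hspan
      have : w = ⟨y, hyN⟩ := Subtype.ext hwy
      rwa [this] at hw
  exact Module.Free.of_basis (Module.Basis.mk hvli hvspan)

end Kaplansky

set_option maxHeartbeats 2000000 in
theorem statement10 (κ : Cardinal) (hκ : ℵ₀ ≤ κ) (hpow : κ ^ ℵ₀ = κ)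
    (p : Ultrafilter ℕ) (hp : IsFreeUltrafilter p) (n : ℕ)
    (f : Idx κ → (ℕ → GZ κ))
    (hdist : ∀ ξ ζ : Idx κ, ξ ≠ ζ → cls κ p (f ξ) ≠ cls κ p (f ζ))
    (hli : LinearIndependent ℚ
      (Sum.elim (fun ξ : Idx κ => cls κ p (f ξ)) (fun ξ : Idx κ => clsChi κ p ξ))) :
    ∃ F : Set (ℕ → GZ κ),
      ∃ b : Module.Basis ((Idx κ) ⊕ F) ℤ ↥(Gsub κ p (Set.range f) n),
        (∀ ξ : Idx κ,
          ((b (Sum.inl ξ) : ↥(Gsub κ p (Set.range f) n)) :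
            Filter.Germ (↑p : Filter ℕ) (GQ κ)) = clsChi κ p ξ) ∧
        (∀ g : F,
          ((b (Sum.inr g) : ↥(Gsub κ p (Set.range f) n)) :
            Filter.Germ (↑p : Filter ℕ) (GQ κ)) = cls κ p ↑g) := by
  classical
  -- notation
  set W := Filter.Germ (↑p : Filter ℕ) (GQ κ) with hW
  set e : (Idx κ ⊕ Idx κ) → W := Sum.elim (fun ξ : Idx κ => cls κ p (f ξ)) (fun ξ : Idx κ => clsChi κ p ξ) with he
  set G := Gsub κ p (Set.range f) n with hG
  have hfact : ((n.factorial : ℚ)) ≠ 0 := Nat.cast_ne_zero.2 (Nat.factorial_ne_zero n)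
  set u : (Idx κ ⊕ Idx κ) → W := fun i => ((n.factorial : ℚ))⁻¹ • e i with hu
  -- the generating set equals the range of u
  have hgen : ({x | ∃ f' ∈ Set.range f, x = ((n.factorial : ℚ))⁻¹ • cls κ p f'} ∪
      {x | ∃ ξ : Idx κ, x = ((n.factorial : ℚ))⁻¹ • clsChi κ p ξ}) = Set.range u := by
    ext w
    constructor
    · rintro (⟨f', ⟨ξ, rfl⟩, rfl⟩ | ⟨ξ, rfl⟩)
      · exact ⟨Sum.inl ξ, rfl⟩
      · exact ⟨Sum.inr ξ, rfl⟩
    · rintro ⟨(ξ | ξ), rfl⟩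
      · exact Or.inl ⟨f ξ, ⟨ξ, rfl⟩, rfl⟩
      · exact Or.inr ⟨ξ, rfl⟩
  -- integral coordinates for elements of G
  have hGint : ∀ x : W, x ∈ G → ∃ c : (Idx κ ⊕ Idx κ) →₀ ℤ,
      x = Finsupp.linearCombination ℚ e
        (Finsupp.mapRange (fun a : ℤ => (a : ℚ) * ((n.factorial : ℚ))⁻¹) (by simp) c) := by
    intro x hx
    have hx2 := (AddSubgroup.mem_inf.1 hx).2
    rw [hgen] at hx2
    have hsub : AddSubgroup.closure (Set.range u) ≤
        (Submodule.span ℤ (Set.range u)).toAddSubgroup :=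
      AddSubgroup.closure_le _ |>.2 Submodule.subset_span
    have hx3 : x ∈ Submodule.span ℤ (Set.range u) := hsub hx2
    obtain ⟨c, hc⟩ := Finsupp.mem_span_range_iff_exists_finsupp.1 hx3
    refine ⟨c, ?_⟩
    rw [Finsupp.linearCombination_apply, Finsupp.sum_mapRange_index (by simp)]
    rw [← hc]
    congr 1
    funext i a
    rw [hu]
    rw [← Int.cast_smul_eq_zsmul ℚ a (((n.factorial : ℚ))⁻¹ • e i), smul_smul]
  have hVmem : ∀ x : W, x ∈ G → x ∈ Submodule.span ℚ (Set.range e) := by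
    intro x hx
    obtain ⟨c, hc⟩ := hGint x hx
    rw [hc]
    refine Finsupp.mem_span_range_iff_exists_finsupp.2
      ⟨Finsupp.mapRange (fun a : ℤ => (a : ℚ) * ((n.factorial : ℚ))⁻¹) (by simp) c, ?_⟩
    rw [← Finsupp.linearCombination_apply]

  -- coordinate map
  set A : ↥G → ((Idx κ ⊕ Idx κ) →₀ ℚ) := fun x => hli.repr ⟨x.1, hVmem x.1 x.2⟩ with hA
  have hAeq : ∀ x : ↥G, Finsupp.linearCombination ℚ e (A x) = x.1 := fun x =>
    hli.linearCombination_repr ⟨x.1, hVmem x.1 x.2⟩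
  have hAint : ∀ x : ↥G, ∃ c : (Idx κ ⊕ Idx κ) →₀ ℤ,
      A x = Finsupp.mapRange (fun a : ℤ => (a : ℚ) * ((n.factorial : ℚ))⁻¹) (by simp) c := by
    intro x
    obtain ⟨c, hc⟩ := hGint x.1 x.2
    exact ⟨c, hli.repr_eq hc.symm⟩
  have hAadd : ∀ x y : ↥G, A (x + y) = A x + A y := by
    intro x y
    rw [hA]
    have : (⟨(x + y).1, hVmem _ (x + y).2⟩ : Submodule.span ℚ (Set.range e)) =
        ⟨x.1, hVmem _ x.2⟩ + ⟨y.1, hVmem _ y.2⟩ := by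
      apply Subtype.ext; rfl
    have h2 := congrArg (fun z => hli.repr z) this
    simp only [map_add] at h2
    exact h2
  -- the inl-coordinates, rescaled
  set Pt : ↥G → GQ κ := fun x =>
    (n.factorial : ℚ) • Finsupp.comapDomain Sum.inl (A x) Sum.inl_injective.injOn with hPt
  have hPtadd : ∀ x y : ↥G, Pt (x + y) = Pt x + Pt y := by
    intro x y
    rw [hPt]
    simp only [hAadd]
    rw [← smul_add]
    congr 1
    ext ξ
    simp [Finsupp.comapDomain_apply]
  have hPtint : ∀ x : ↥G, ∃ cz : GZ κ, Pt x = toQ κ cz := by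
    intro x
    obtain ⟨c, hc⟩ := hAint x
    refine ⟨Finsupp.comapDomain Sum.inl c Sum.inl_injective.injOn, ?_⟩
    rw [hPt]
    ext ξ
    simp only [hc, Finsupp.smul_apply, Finsupp.comapDomain_apply, Finsupp.mapRange_apply,
      toQ, smul_eq_mul]
    field_simp
  have htoQadd : ∀ c d : GZ κ, toQ κ (c + d) = toQ κ c + toQ κ d := by
    intro c d
    exact Finsupp.mapRange_add (by push_cast; ring_nf; simp) _ _
  have htoQinj : Function.Injective (toQ κ) := by
    intro c d hcd
    ext ξ
    have := congrArg (fun z : GQ κ => z ξ) hcd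
    simpa [toQ, Finsupp.mapRange_apply] using this
  set piZ : ↥G → GZ κ := fun x => (hPtint x).choose with hpiZ
  have hpiZ_spec : ∀ x : ↥G, toQ κ (piZ x) = Pt x := fun x => (hPtint x).choose_spec.symm
  have hpiZadd : ∀ x y : ↥G, piZ (x + y) = piZ x + piZ y := by
    intro x y
    apply htoQinj
    rw [htoQadd, hpiZ_spec, hpiZ_spec, hpiZ_spec, hPtadd]
  set piL : ↥G →ₗ[ℤ] GZ κ := (AddMonoidHom.mk' piZ (fun x y => hpiZadd x y)).toIntLinearMap
    with hpiL
  -- constants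
  have hconst : ∀ c : GZ κ, cls κ p (fun _ => c) =
      (↑(fun _ : ℕ => toQ κ c) : W) := fun c => rfl
  have hchiconst : ∀ ξ : Idx κ, clsChi κ p ξ =
      (↑(fun _ : ℕ => (Finsupp.single ξ (1:ℚ) : GQ κ)) : W) := by
    intro ξ
    rw [clsChi, hconst]
    congr 1
    funext m
    simp [toQ, chi, Finsupp.mapRange_single]
  have hsumconst : ∀ b : GQ κ,
      Finsupp.linearCombination ℚ (fun ξ : Idx κ => clsChi κ p ξ) b =
        (↑(fun _ : ℕ => b) : W) := by
    intro b
    induction b using Finsupp.induction_linear with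
    | zero => rw [map_zero]; rfl
    | add f g hf hg =>
      rw [map_add, hf, hg]
      rw [← Filter.Germ.coe_add]
      rfl
    | single a r =>
      rw [Finsupp.linearCombination_single, hchiconst]
      rw [← Filter.Germ.coe_smul]
      congr 1
      funext m
      simp [Finsupp.smul_single]

  -- constants with integer values lie in G
  have hchimem : ∀ ξ : Idx κ, clsChi κ p ξ ∈ G := by
    intro ξ
    rw [hG, Gsub]
    refine AddSubgroup.mem_inf.2 ⟨⟨fun _ => chi κ ξ, rfl⟩, ?_⟩
    have hgen' : ((n.factorial : ℚ))⁻¹ • clsChi κ p ξ ∈ AddSubgroup.closure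
        ({x | ∃ f' ∈ Set.range f, x = ((n.factorial : ℚ))⁻¹ • cls κ p f'} ∪
         {x | ∃ ξ : Idx κ, x = ((n.factorial : ℚ))⁻¹ • clsChi κ p ξ}) :=
      AddSubgroup.subset_closure (Or.inr ⟨ξ, rfl⟩)
    have := AddSubgroup.zsmul_mem _ hgen' (n.factorial : ℤ)
    have heq : (n.factorial : ℤ) • (((n.factorial : ℚ))⁻¹ • clsChi κ p ξ) = clsChi κ p ξ := by
      rw [← Int.cast_smul_eq_zsmul ℚ, smul_smul]
      push_cast
      rw [mul_inv_cancel₀ hfact, one_smul]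
    rwa [heq] at this
  have hconstmem : ∀ c : GZ κ, (↑(fun _ : ℕ => toQ κ c) : W) ∈ G := by
    intro c
    have h1 : (↑(fun _ : ℕ => toQ κ c) : W) =
        Finsupp.linearCombination ℚ (fun ξ : Idx κ => clsChi κ p ξ) (toQ κ c) :=
      (hsumconst (toQ κ c)).symm
    rw [h1, Finsupp.linearCombination_apply, Finsupp.sum]
    apply AddSubgroup.sum_mem
    intro ξ _
    have : (toQ κ c) ξ • clsChi κ p ξ = (c ξ) • clsChi κ p ξ := by
      rw [toQ, Finsupp.mapRange_apply, Int.cast_smul_eq_zsmul]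
    rw [this]
    exact AddSubgroup.zsmul_mem _ (hchimem ξ) _
  set km : GZ κ → ↥G := fun c => ⟨(↑(fun _ : ℕ => toQ κ c) : W), hconstmem c⟩ with hkm
  have hkmadd : ∀ c d : GZ κ, km (c + d) = km c + km d := by
    intro c d
    apply Subtype.ext
    show (↑(fun _ : ℕ => toQ κ (c + d)) : W) = _
    rw [htoQadd c d]
    rw [show (fun _ : ℕ => toQ κ c + toQ κ d) = (fun _ : ℕ => toQ κ c) + (fun _ : ℕ => toQ κ d)
      from rfl, Filter.Germ.coe_add]
    rfl
  set kmL : GZ κ →ₗ[ℤ] ↥G := (AddMonoidHom.mk' km (fun c d => hkmadd c d)).toIntLinearMap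
    with hkmL
  -- A of a constant
  have hAkm : ∀ c : GZ κ, A (km c) = Finsupp.embDomain Function.Embedding.inr (toQ κ c) := by
    intro c
    apply hli.repr_eq
    rw [Finsupp.linearCombination_embDomain]
    have hcomp : (e ∘ (Function.Embedding.inr : Idx κ ↪ Idx κ ⊕ Idx κ)) =
        fun ξ : Idx κ => clsChi κ p ξ := by
      funext ξ; rfl
    rw [hcomp, hsumconst]
  have hpiLkm : ∀ c : GZ κ, piL (km c) = 0 := by
    intro c
    apply htoQinj
    show toQ κ (piZ (km c)) = toQ κ 0
    rw [hpiZ_spec]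
    have : Pt (km c) = 0 := by
      show (n.factorial : ℚ) • Finsupp.comapDomain Sum.inl (A (km c)) Sum.inl_injective.injOn = 0
      have h0 : Finsupp.comapDomain Sum.inl (A (km c)) Sum.inl_injective.injOn = 0 := by
        ext ξ
        rw [Finsupp.comapDomain_apply, hAkm]
        exact Finsupp.embDomain_notin_range _ _ _ (by simp)
      rw [h0, smul_zero]
    rw [this]
    ext ξ
    simp [toQ]
  have hpiLval : ∀ x : ↥G, toQ κ (piL x) = Pt x := fun x => hpiZ_spec x
  -- kernel characterization
  have hker : ∀ x : ↥G, piL x = 0 → ∃ c : GZ κ, km c = x := by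
    intro x hx
    have hPt0 : Pt x = 0 := by
      rw [← hpiLval, hx]
      ext ξ; simp [toQ]
    have hAinl : ∀ ξ : Idx κ, A x (Sum.inl ξ) = 0 := by
      intro ξ
      have h1 : Finsupp.comapDomain Sum.inl (A x) Sum.inl_injective.injOn = 0 := by
        rcases smul_eq_zero.1 (hPt ▸ hPt0) with h | h
        · exact absurd h hfact
        · exact h
      have := congrArg (fun z : GQ κ => z ξ) h1
      simpa [Finsupp.comapDomain_apply] using this
    set b : GQ κ := Finsupp.comapDomain Sum.inr (A x) Sum.inr_injective.injOn with hb
    have hAemb : A x = Finsupp.embDomain Function.Embedding.inr b := by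
      ext i
      cases i with
      | inl ξ =>
        rw [hAinl ξ]
        exact (Finsupp.embDomain_notin_range _ _ _ (by simp)).symm
      | inr ξ =>
        rw [hb]
        have : (Function.Embedding.inr : Idx κ ↪ Idx κ ⊕ Idx κ) ξ = Sum.inr ξ := rfl
        rw [← this, Finsupp.embDomain_apply_self, Finsupp.comapDomain_apply]
        rfl
    have hxconst : x.1 = (↑(fun _ : ℕ => b) : W) := by
      rw [← hAeq x, hAemb, Finsupp.linearCombination_embDomain]
      have hcomp : (e ∘ (Function.Embedding.inr : Idx κ ↪ Idx κ ⊕ Idx κ)) =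
          fun ξ : Idx κ => clsChi κ p ξ := by funext ξ; rfl
      rw [hcomp, hsumconst]
    obtain ⟨g, hg⟩ := (AddSubgroup.mem_inf.1 x.2).1
    have hgerm : (fun m => toQ κ (g m)) =ᶠ[(↑p : Filter ℕ)] (fun _ => b) := by
      apply Filter.Germ.coe_eq.1
      show cls κ p g = _
      have : clsHom κ p g = cls κ p g := rfl
      rw [← this, hg, hxconst]
    obtain ⟨m, hm⟩ := hgerm.exists
    refine ⟨g m, Subtype.ext ?_⟩
    have hm' : toQ κ (g m) = b := hm
    show (↑(fun _ : ℕ => toQ κ (g m)) : W) = x.1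
    rw [hxconst, hm']
  have hkminj : Function.Injective km := by
    intro c d hcd
    have := congrArg (fun z : ↥G => z.1) hcd
    have h2 : (fun _ : ℕ => toQ κ c) =ᶠ[(↑p : Filter ℕ)] (fun _ => toQ κ d) :=
      Filter.Germ.coe_eq.1 this
    obtain ⟨m, hm⟩ := h2.exists
    exact htoQinj hm

  -- the image lattice is free
  haveI : WellFoundedLT (Idx κ) := Subtype.wellFoundedLT _
  set L : Submodule ℤ (GZ κ) := LinearMap.range piL with hL
  haveI : Module.Free ℤ ↥L := submodule_finsuppInt_free L
  set bL : Module.Basis (Module.Free.ChooseBasisIndex ℤ ↥L) ℤ ↥L := Module.Free.chooseBasis ℤ ↥L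
    with hbL
  have hlift : ∀ i, ∃ g : ↥G, piL g = (bL i).1 := fun i => (bL i).2
  set lift : _ → ↥G := fun i => (hlift i).choose with hliftdef
  have hliftspec : ∀ i, piL (lift i) = (bL i).1 := fun i => (hlift i).choose_spec
  set sec : ↥L →ₗ[ℤ] ↥G := bL.constr ℤ lift with hsecdef
  have hseccomp : piL.comp sec = L.subtype := by
    apply bL.ext
    intro i
    rw [LinearMap.comp_apply, hsecdef, Module.Basis.constr_basis]
    exact hliftspec i
  have hsecval : ∀ z : ↥L, piL (sec z) = z.1 := by
    intro z
    have := congrArg (fun m : ↥L →ₗ[ℤ] GZ κ => m z) hseccomp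
    exact this
  set B : (GZ κ × ↥L) →ₗ[ℤ] ↥G :=
    kmL.comp (LinearMap.fst ℤ (GZ κ) ↥L) + sec.comp (LinearMap.snd ℤ (GZ κ) ↥L) with hB
  have hBapply : ∀ (c : GZ κ) (z : ↥L), B (c, z) = km c + sec z := fun c z => rfl
  have hpiLB : ∀ (c : GZ κ) (z : ↥L), piL (B (c, z)) = z.1 := by
    intro c z
    rw [hBapply, map_add, hpiLkm, hsecval, zero_add]
  have hBinj : Function.Injective B := by
    rintro ⟨c1, z1⟩ ⟨c2, z2⟩ h
    have hz : z1 = z2 := by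
      apply Subtype.ext
      rw [← hpiLB c1 z1, ← hpiLB c2 z2, h]
    have hc : c1 = c2 := by
      apply hkminj
      have h2 := h
      rw [hBapply, hBapply, hz] at h2
      exact add_right_cancel h2
    rw [hz, hc]
  have hBsurj : Function.Surjective B := by
    intro x
    set z : ↥L := ⟨piL x, LinearMap.mem_range.2 ⟨x, rfl⟩⟩ with hz
    have hy : piL (x - sec z) = 0 := by
      rw [map_sub, hsecval, sub_eq_zero]
    obtain ⟨c, hc⟩ := hker (x - sec z) hy
    refine ⟨(c, z), ?_⟩
    rw [hBapply, hc]
    abel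
  have hBbij : Function.Bijective B := ⟨hBinj, hBsurj⟩
  set Phi : (GZ κ × ↥L) ≃ₗ[ℤ] ↥G := LinearEquiv.ofBijective B hBbij with hPhi
  set bP : Module.Basis (Idx κ ⊕ Module.Free.ChooseBasisIndex ℤ ↥L) ℤ (GZ κ × ↥L) :=
    (Finsupp.basisSingleOne : Module.Basis (Idx κ) ℤ (GZ κ)).prod bL with hbP
  set bG0 := bP.map Phi with hbG0
  -- representative sequences
  have hrepex : ∀ i, ∃ g : ℕ → GZ κ, clsHom κ p g = (lift i).1 := by
    intro i
    exact (AddSubgroup.mem_inf.1 (lift i).2).1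
  set rep : _ → (ℕ → GZ κ) := fun i => (hrepex i).choose with hrepdef
  have hrepspec : ∀ i, cls κ p (rep i) = (lift i).1 := fun i => (hrepex i).choose_spec
  have hliftinj : Function.Injective lift := by
    intro i j hij
    have : (bL i).1 = (bL j).1 := by rw [← hliftspec i, ← hliftspec j, hij]
    exact bL.injective (Subtype.ext this)
  have hrepinj : Function.Injective rep := by
    intro i j hij
    apply hliftinj
    apply Subtype.ext
    rw [← hrepspec i, ← hrepspec j, hij]
  set F : Set (ℕ → GZ κ) := Set.range rep with hF
  set eF : _ ≃ ↥F := Equiv.ofInjective rep hrepinj with heF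
  set bfinal := bG0.reindex (Equiv.sumCongr (Equiv.refl (Idx κ)) eF) with hbfinal
  refine ⟨F, bfinal, ?_, ?_⟩
  · intro ξ
    have h1 : bfinal (Sum.inl ξ) = bG0 (Sum.inl ξ) := by
      rw [hbfinal, Module.Basis.reindex_apply]
      congr 1
    rw [h1, hbG0, Module.Basis.map_apply]
    have h2 : bP (Sum.inl ξ) = (Finsupp.single ξ 1, 0) := by
      rw [hbP]
      simp only [Module.Basis.prod_apply, LinearMap.coe_inl, LinearMap.coe_inr, Sum.elim_inl,
        Function.comp_apply, Finsupp.coe_basisSingleOne]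
    rw [h2, hPhi]
    simp only [LinearEquiv.ofBijective_apply]
    have h3 : B (Finsupp.single ξ 1, (0 : ↥L)) = km (Finsupp.single ξ 1) := by
      rw [hBapply, map_zero, add_zero]
    rw [h3]
    show (↑(fun _ : ℕ => toQ κ (Finsupp.single ξ 1)) : W) = clsChi κ p ξ
    rw [hchiconst]
    congr 1
    funext m
    simp [toQ, Finsupp.mapRange_single]
  · intro g
    have h1 : bfinal (Sum.inr g) = bG0 (Sum.inr (eF.symm g)) := by
      rw [hbfinal, Module.Basis.reindex_apply]
      congr 1
    rw [h1, hbG0, Module.Basis.map_apply]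
    have h2 : bP (Sum.inr (eF.symm g)) = ((0 : GZ κ), bL (eF.symm g)) := by
      rw [hbP]
      simp only [Module.Basis.prod_apply, LinearMap.coe_inl, LinearMap.coe_inr, Sum.elim_inr,
        Function.comp_apply]
    rw [h2, hPhi]
    simp only [LinearEquiv.ofBijective_apply]
    have h3 : B ((0 : GZ κ), bL (eF.symm g)) = sec (bL (eF.symm g)) := by
      rw [hBapply]
      have : km 0 = 0 := by
        apply Subtype.ext
        show (↑(fun _ : ℕ => toQ κ 0) : W) = 0
        have : toQ κ 0 = 0 := by ext ξ; simp [toQ]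
        rw [this]
        rfl
      rw [this, zero_add]
    rw [h3, hsecdef, Module.Basis.constr_basis]
    have h4 : (g : ℕ → GZ κ) = rep (eF.symm g) := by
      have := eF.apply_symm_apply g
      rw [heF] at this
      have h5 := congrArg (fun z : ↥F => (z : ℕ → GZ κ)) this
      exact h5.symm
    rw [h4, ← hrepspec (eF.symm g)]

end
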